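/- Let $r\ge 2$ be an integer and $\alpha\in(0,\frac14)$. Let $B$ be a bipartite graph with parts $U$ and $W$, $|U|=p$, $|W|=q$. If $p \ge 4\lfloor\alpha^r\ln q\rfloor$ and $e(B) \ge \frac{1}{2}pq$, then $B$ contains a complete bipartite subgraph $K(a,b)$ with $a = \lfloor\alpha^r\ln q\rfloor$ vertices in $U$ and $b = \lfloor q^{1-\alpha^{r-1}}\rfloor$ vertices in $W$. -/

import Mathlib

open Finset

/-- Number of edges (ordered pairs) between `A` and `B`. -/
noncomputable def eBetween {V : Type*} (G : SimpleGraph V) (A B : Finset V) : ℕ :=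
  Nat.card {p : V × V // p.1 ∈ A ∧ p.2 ∈ B ∧ G.Adj p.1 p.2}

/-- Edge density between two disjoint vertex sets. -/
noncomputable def density {V : Type*} (G : SimpleGraph V) (A B : Finset V) : ℝ :=
  (eBetween G A B : ℝ) / ((A.card : ℝ) * (B.card : ℝ))

/-- Number of neighbours of `v` inside the set `S`. -/
noncomputable def degTo {V : Type*} (G : SimpleGraph V) (v : V) (S : Set V) : ℕ :=
  Nat.card {u : V // u ∈ S ∧ G.Adj v u}

/-- `G` is an `ℓ`-partite graph with (nonempty, independent) parts `P 0, …, P (ℓ-1)`. -/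
def IsPartiteOn {V : Type*} (G : SimpleGraph V) {ℓ : ℕ} (P : Fin ℓ → Finset V) : Prop :=
  (∀ i, (P i).Nonempty) ∧ (∀ i j, i ≠ j → Disjoint (P i) (P j)) ∧
  (∀ v, ∃ i, v ∈ P i) ∧ ∀ i, ∀ a ∈ P i, ∀ b ∈ P i, ¬ G.Adj a b

/-- `G` contains a copy of `H` (an injective graph homomorphism). -/
def ContainsCopy {W V : Type*} (H : SimpleGraph W) (G : SimpleGraph V) : Prop :=
  ∃ f : W → V, Function.Injective f ∧ ∀ a b, H.Adj a b → G.Adj (f a) (f b)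

/-- `H` admits a colouring with `χ(H) - 1` colours in which all colour classes are
independent except the first, which induces a graph of maximum degree at most 1. -/
def AlmostColourCritical {W : Type*} [Fintype W] (H : SimpleGraph W) : Prop :=
  ∃ k : ℕ, H.chromaticNumber = (k : ℕ∞) ∧
    ∃ φ : W → Fin (k - 1),
      (∀ a b c : W, (φ a).val = 0 → (φ b).val = 0 → (φ c).val = 0 →
        H.Adj a b → H.Adj a c → b = c) ∧
      ∀ a b : W, (φ a).val ≠ 0 → φ a = φ b → ¬ H.Adj a b

lemma alpha_log_four_le_one {α : ℝ} (hα0 : 0 < α) (hα : α < 1 / 4) : α * Real.log 4 ≤ 1 := by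
  have h1 : Real.log 4 ≤ 3 := by
    have := Real.log_le_sub_one_of_pos (by norm_num : (0 : ℝ) < 4); linarith
  have h2 : (0 : ℝ) ≤ Real.log 4 := Real.log_nonneg (by norm_num)
  nlinarith

open Classical in
/-- degree of `w` into `U`. -/
noncomputable def degIn {V : Type*} (G : SimpleGraph V) (U : Finset V) (w : V) : ℕ :=
  (U.filter fun u => G.Adj u w).card

open Classical in
/-- number of common neighbours of `S` inside `Ws`. -/
noncomputable def cCard {V : Type*} (G : SimpleGraph V) (S Ws : Finset V) : ℕ :=
  (Ws.filter fun w => ∀ u ∈ S, G.Adj u w).card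

open Classical in
lemma eBetween_eq_sum {V : Type*} [Fintype V] (G : SimpleGraph V)
    (U W : Finset V) :
    eBetween G U W = ∑ w ∈ W, degIn G U w := by
  rw [eBetween, Nat.card_eq_fintype_card, Fintype.card_subtype]
  have h : (univ.filter fun p : V × V => p.1 ∈ U ∧ p.2 ∈ W ∧ G.Adj p.1 p.2)
      = (U ×ˢ W).filter (fun p => G.Adj p.1 p.2) := by
    ext p; simp [Finset.mem_product, and_assoc]
  rw [h, Finset.card_filter, Finset.sum_product, Finset.sum_comm]
  simp only [degIn, Finset.card_filter]

open Classical in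
lemma double_count {V : Type*} [Fintype V] (G : SimpleGraph V)
    (U W : Finset V) (a : ℕ) :
    ∑ S ∈ U.powersetCard a, cCard G S W
      = ∑ w ∈ W, (degIn G U w).choose a := by
  calc ∑ S ∈ U.powersetCard a, cCard G S W
      = ∑ S ∈ U.powersetCard a, ∑ w ∈ W, (if ∀ u ∈ S, G.Adj u w then 1 else 0) := by
        simp only [cCard, Finset.card_filter]
        congr!
    _ = ∑ w ∈ W, ∑ S ∈ U.powersetCard a, (if ∀ u ∈ S, G.Adj u w then 1 else 0) :=
        Finset.sum_comm
    _ = ∑ w ∈ W, ((U.powersetCard a).filter fun S => ∀ u ∈ S, G.Adj u w).card := by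
        simp only [Finset.card_filter]
    _ = ∑ w ∈ W, ((U.filter fun u => G.Adj u w).powersetCard a).card := by
        refine Finset.sum_congr rfl fun w _ => ?_
        congr 1
        ext S
        simp only [Finset.mem_filter, Finset.mem_powersetCard, Finset.subset_iff,
          Finset.mem_filter]
        constructor
        · rintro ⟨⟨h1, h2⟩, h3⟩; exact ⟨fun x hx => ⟨h1 hx, h3 x hx⟩, h2⟩
        · rintro ⟨h1, h2⟩; exact ⟨⟨fun x hx => (h1 hx).1, h2⟩, fun x hx => (h1 hx).2⟩
    _ = ∑ w ∈ W, (degIn G U w).choose a := by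
        simp [degIn, Finset.card_powersetCard]

open Classical in
lemma cCard_extract {V : Type*} (G : SimpleGraph V) (S Ws : Finset V) {b : ℕ}
    (h : b ≤ cCard G S Ws) :
    ∃ B' : Finset V, B' ⊆ Ws ∧ B'.card = b ∧ ∀ u ∈ S, ∀ w ∈ B', G.Adj u w := by
  obtain ⟨B', hsub, hcard⟩ :=
    Finset.exists_subset_card_eq (h : b ≤ (Ws.filter fun w => ∀ u ∈ S, G.Adj u w).card)
  exact ⟨B', hsub.trans (Finset.filter_subset _ _), hcard,
    fun u hu w hw => (Finset.mem_filter.1 (hsub hw)).2 u hu⟩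

set_option maxHeartbeats 1000000 in
theorem complete_bipartite_in_dense_bipartite {V : Type*} [Fintype V]
    (G : SimpleGraph V) (r : ℕ) (α : ℝ) (hr : 2 ≤ r) (hα0 : 0 < α) (hα : α < 1 / 4)
    (U W : Finset V) (hUW : Disjoint U W)
    (hbip : ∀ a b : V, G.Adj a b → (a ∈ U ∧ b ∈ W) ∨ (a ∈ W ∧ b ∈ U))
    (hp : 4 * ⌊α ^ r * Real.log W.card⌋₊ ≤ U.card)
    (he : ((U.card : ℝ) * W.card) / 2 ≤ (eBetween G U W : ℝ)) :
    ∃ A B' : Finset V, A ⊆ U ∧ B' ⊆ W ∧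
      A.card = ⌊α ^ r * Real.log W.card⌋₊ ∧
      B'.card = ⌊(W.card : ℝ) ^ ((1 : ℝ) - α ^ (r - 1))⌋₊ ∧
      ∀ a ∈ A, ∀ b ∈ B', G.Adj a b := by
  classical
  set q := W.card with hqdef
  set p := U.card with hpdef
  set a := ⌊α ^ r * Real.log q⌋₊ with hadef
  set b := ⌊(q : ℝ) ^ ((1 : ℝ) - α ^ (r - 1))⌋₊ with hbdef
  have hα1 : α < 1 := lt_trans hα (by norm_num)
  have hαr1_lt : α ^ (r - 1) < 1 := pow_lt_one₀ hα0.le hα1 (by omega)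
  have hαr1_pos : 0 < α ^ (r - 1) := pow_pos hα0 _
  have hap : a ≤ p := by omega
  -- trivial case b = 0
  by_cases hb0 : b = 0
  · obtain ⟨A, hAU, hA⟩ := Finset.exists_subset_card_eq hap
    exact ⟨A, ∅, hAU, Finset.empty_subset _, hA, by simp [hb0], by simp⟩
  -- b ≤ q always
  have hbq : b ≤ q := by
    rcases Nat.eq_zero_or_pos q with h0 | h1
    · exfalso; apply hb0
      rw [hbdef, h0]
      push_cast
      rw [Real.zero_rpow (by linarith : (1 : ℝ) - α ^ (r - 1) ≠ 0)]
      simp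
    · have h1' : (1 : ℝ) ≤ q := by exact_mod_cast h1
      have : (q : ℝ) ^ ((1 : ℝ) - α ^ (r - 1)) ≤ (q : ℝ) ^ (1 : ℝ) :=
        Real.rpow_le_rpow_of_exponent_le h1' (by linarith)
      calc b ≤ ⌊(q : ℝ) ^ (1 : ℝ)⌋₊ := Nat.floor_le_floor this
        _ = q := by rw [Real.rpow_one, Nat.floor_natCast]
  -- trivial case a = 0
  by_cases ha0 : a = 0
  · obtain ⟨B', hB'W, hB'⟩ := Finset.exists_subset_card_eq hbq
    exact ⟨∅, B', Finset.empty_subset _, hB'W, by simp [ha0], hB', by simp⟩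
  -- main case
  have ha1 : 1 ≤ a := Nat.one_le_iff_ne_zero.2 ha0
  have hx1 : (1 : ℝ) ≤ α ^ r * Real.log q :=
    le_of_not_gt fun h => ha0 (Nat.floor_eq_zero.2 h)
  have hαrpos : (0 : ℝ) < α ^ r := pow_pos hα0 r
  have hlogq : 0 < Real.log q := by
    by_contra h
    push_neg at h
    nlinarith
  have hq1 : (1 : ℝ) < q := by
    by_contra h
    push_neg at h
    have := Real.log_nonpos (by positivity) h
    linarith
  have hq0 : (0 : ℝ) < q := by linarith
  have hp0 : 0 < p := by omega
  set d : V → ℕ := degIn G U with hddef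
  have hsum : (eBetween G U W : ℕ) = ∑ w ∈ W, d w := eBetween_eq_sum G U W
  -- a ≤ p/4 in ℝ
  have haR : (a : ℝ) ≤ (p : ℝ) / 4 := by
    have h4 : ((4 * a : ℕ) : ℝ) ≤ ((p : ℕ) : ℝ) := Nat.cast_le.2 hp
    push_cast at h4
    linarith
  -- sum of degrees
  have hdeg : (p : ℝ) * q / 2 ≤ ∑ w ∈ W, (d w : ℝ) := by
    have : ((∑ w ∈ W, d w : ℕ) : ℝ) = ∑ w ∈ W, (d w : ℝ) := by push_cast; ring
    rw [← this, ← hsum]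
    exact he
  set g : V → ℕ := fun w => d w + 1 - a with hgdef
  have hg_lb : ∀ w, (d w : ℝ) - a ≤ g w := by
    intro w
    rcases le_total a (d w + 1) with h | h
    · have : ((d w + 1 - a : ℕ) : ℝ) = (d w : ℝ) + 1 - a := by
        push_cast [Nat.cast_sub h]; ring
      rw [hgdef]; simp only []; rw [this]; linarith
    · have h' : (d w : ℝ) + 1 ≤ a := by exact_mod_cast h
      have : (0 : ℝ) ≤ (g w : ℝ) := Nat.cast_nonneg _
      linarith
  have hgsum : (p : ℝ) * q / 4 ≤ ∑ w ∈ W, (g w : ℝ) := by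
    have h1 : ∑ w ∈ W, ((d w : ℝ) - a) ≤ ∑ w ∈ W, (g w : ℝ) :=
      Finset.sum_le_sum fun w _ => hg_lb w
    have h2 : ∑ w ∈ W, ((d w : ℝ) - a) = (∑ w ∈ W, (d w : ℝ)) - q * a := by
      rw [Finset.sum_sub_distrib, Finset.sum_const, nsmul_eq_mul]
    nlinarith [hdeg, hq0]
  -- power mean
  have hpm : (∑ w ∈ W, (g w : ℝ)) ^ a / (q : ℝ) ^ (a - 1) ≤ ∑ w ∈ W, (g w : ℝ) ^ a := by
    have := pow_sum_div_card_le_sum_pow (s := W) (f := fun w => (g w : ℝ))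
      (fun i _ => Nat.cast_nonneg _) (a - 1)
    have ha' : a - 1 + 1 = a := by omega
    rwa [ha'] at this
  have hqa : ((W.card : ℝ)) = (q : ℝ) := by rw [hqdef]
  -- lower bound on ∑ g^a
  have hkey : (q : ℝ) * ((p : ℝ) / 4) ^ a ≤ ∑ w ∈ W, (g w : ℝ) ^ a := by
    have h1 : ((p : ℝ) * q / 4) ^ a ≤ (∑ w ∈ W, (g w : ℝ)) ^ a :=
      pow_le_pow_left₀ (by positivity) hgsum a
    have h2 : ((p : ℝ) * q / 4) ^ a / (q : ℝ) ^ (a - 1) = (q : ℝ) * ((p : ℝ) / 4) ^ a := by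
      have : ((p : ℝ) * q / 4) ^ a = ((p : ℝ) / 4) ^ a * (q : ℝ) ^ a := by
        rw [← mul_pow]; ring_nf
      rw [this]
      have : (q : ℝ) ^ a = (q : ℝ) ^ (a - 1) * q := by
        rw [← pow_succ]; congr 1; omega
      rw [this]
      field_simp
    calc (q : ℝ) * ((p : ℝ) / 4) ^ a = ((p : ℝ) * q / 4) ^ a / (q : ℝ) ^ (a - 1) := h2.symm
      _ ≤ (∑ w ∈ W, (g w : ℝ)) ^ a / (q : ℝ) ^ (a - 1) := by
          exact div_le_div_of_nonneg_right h1 (by positivity)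
      _ ≤ ∑ w ∈ W, (g w : ℝ) ^ a := by rwa [hqa] at hpm
  -- b * 4^a ≤ q
  have hlog4 : Real.log 4 ≤ 3 := by
    have := Real.log_le_sub_one_of_pos (by norm_num : (0 : ℝ) < 4); linarith
  have hlog4' : (0 : ℝ) ≤ Real.log 4 := Real.log_nonneg (by norm_num)
  have haF : (a : ℝ) ≤ α ^ r * Real.log q := Nat.floor_le (by linarith)
  have hpowsplit : α ^ r = α ^ (r - 1) * α := by rw [← pow_succ]; congr 1; omega
  have hexp : (a : ℝ) * Real.log 4 ≤ α ^ (r - 1) * Real.log q := by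
    have h1 : (a : ℝ) * Real.log 4 ≤ (α ^ r * Real.log q) * Real.log 4 :=
      mul_le_mul_of_nonneg_right haF hlog4'
    have h2 : α * Real.log 4 ≤ 1 := alpha_log_four_le_one hα0 hα
    have h3 : (α ^ r * Real.log q) * Real.log 4
        = (α ^ (r - 1) * Real.log q) * (α * Real.log 4) := by rw [hpowsplit]; ring
    have h4 : (α ^ (r - 1) * Real.log q) * (α * Real.log 4)
        ≤ (α ^ (r - 1) * Real.log q) * 1 :=
      mul_le_mul_of_nonneg_left h2 (by positivity)
    rw [h3] at h1
    linarith
  have h4a : (4 : ℝ) ^ a ≤ (q : ℝ) ^ (α ^ (r - 1)) := by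
    rw [← Real.rpow_natCast 4 a, Real.rpow_def_of_pos (by norm_num : (0:ℝ) < 4),
      Real.rpow_def_of_pos hq0]
    exact Real.exp_le_exp.2 (by rw [mul_comm (Real.log 4)]; linarith [hexp])
  have h4pos : (0 : ℝ) < (4 : ℝ) ^ a := by positivity
  have hb4q : (b : ℝ) * 4 ^ a ≤ q := by
    have hqx : (0 : ℝ) < (q : ℝ) ^ (α ^ (r - 1)) := Real.rpow_pos_of_pos hq0 _
    have hbR : (b : ℝ) ≤ (q : ℝ) ^ ((1 : ℝ) - α ^ (r - 1)) :=
      Nat.floor_le (Real.rpow_nonneg hq0.le _)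
    have hq_split : (q : ℝ) ^ ((1 : ℝ) - α ^ (r - 1)) = q / (q : ℝ) ^ (α ^ (r - 1)) := by
      rw [Real.rpow_sub hq0, Real.rpow_one]
    rw [hq_split] at hbR
    have hb1 : (b : ℝ) * (q : ℝ) ^ (α ^ (r - 1)) ≤ q := by
      rw [div_eq_mul_inv] at hbR
      calc (b : ℝ) * (q : ℝ) ^ (α ^ (r - 1))
          ≤ ((q : ℝ) * ((q : ℝ) ^ (α ^ (r - 1)))⁻¹) * (q : ℝ) ^ (α ^ (r - 1)) :=
            mul_le_mul_of_nonneg_right hbR hqx.le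
        _ = q := by field_simp
    have hbnn : (0 : ℝ) ≤ b := Nat.cast_nonneg _
    nlinarith [mul_le_mul_of_nonneg_left h4a hbnn]
  -- upper bound: g^a ≤ a! * choose
  have hup : ∀ w, (g w : ℝ) ^ a ≤ (a.factorial : ℝ) * ((d w).choose a) := by
    intro w
    have h1 : (g w) ^ a ≤ (d w).descFactorial a := Nat.pow_sub_le_descFactorial (d w) a
    rw [Nat.descFactorial_eq_factorial_mul_choose] at h1
    exact_mod_cast h1
  set T : ℕ := ∑ S ∈ U.powersetCard a, cCard G S W with hTdef
  have hT : T = ∑ w ∈ W, ((d w)).choose a := double_count G U W a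
  have h5 : ∑ w ∈ W, (g w : ℝ) ^ a ≤ (a.factorial : ℝ) * T := by
    calc ∑ w ∈ W, (g w : ℝ) ^ a ≤ ∑ w ∈ W, (a.factorial : ℝ) * ((d w).choose a) :=
          Finset.sum_le_sum fun w _ => hup w
      _ = (a.factorial : ℝ) * ∑ w ∈ W, ((d w).choose a : ℝ) := by rw [Finset.mul_sum]
      _ = (a.factorial : ℝ) * T := by rw [hT]; push_cast; ring
  have h6 : (b : ℝ) * ((a.factorial : ℝ) * (p.choose a)) ≤ (b : ℝ) * (p : ℝ) ^ a := by
    have h1 : a.factorial * p.choose a ≤ p ^ a := by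
      rw [← Nat.descFactorial_eq_factorial_mul_choose]
      exact Nat.descFactorial_le_pow p a
    have h1' : (a.factorial : ℝ) * (p.choose a) ≤ (p : ℝ) ^ a := by exact_mod_cast h1
    exact mul_le_mul_of_nonneg_left h1' (Nat.cast_nonneg _)
  have h7 : (b : ℝ) * (p : ℝ) ^ a ≤ (q : ℝ) * ((p : ℝ) / 4) ^ a := by
    have hpnn : (0 : ℝ) ≤ (p : ℝ) ^ a := by positivity
    have h1 := mul_le_mul_of_nonneg_right hb4q hpnn
    rw [div_pow, ← mul_div_assoc, le_div_iff₀ h4pos]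
    nlinarith [h1]
  -- combine
  have hnatR : (b : ℝ) * (p.choose a) ≤ (T : ℝ) := by
    have hfa : (0 : ℝ) < (a.factorial : ℝ) := by exact_mod_cast a.factorial_pos
    have hchain : (b : ℝ) * ((a.factorial : ℝ) * (p.choose a)) ≤ (a.factorial : ℝ) * T :=
      le_trans h6 (le_trans h7 (le_trans hkey h5))
    have : (a.factorial : ℝ) * ((b : ℝ) * (p.choose a)) ≤ (a.factorial : ℝ) * T := by
      linarith [hchain, (by ring : (b : ℝ) * ((a.factorial : ℝ) * (p.choose a))
        = (a.factorial : ℝ) * ((b : ℝ) * (p.choose a)))]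
    exact le_of_mul_le_mul_left this hfa
  have hnat : b * p.choose a ≤ T := by exact_mod_cast hnatR
  -- pigeonhole
  have hCpos : 0 < p.choose a := Nat.choose_pos hap
  have hb1 : 1 ≤ b := Nat.one_le_iff_ne_zero.2 hb0
  have hex : ∃ S ∈ U.powersetCard a, b ≤ cCard G S W := by
    by_contra hcon
    push_neg at hcon
    have hle : T ≤ ∑ _S ∈ U.powersetCard a, (b - 1) := by
      rw [hTdef]
      exact Finset.sum_le_sum fun S hS => by have := hcon S hS; omega
    rw [Finset.sum_const, smul_eq_mul, Finset.card_powersetCard] at hle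
    rw [← hpdef] at hle
    have h2 : p.choose a * (b - 1) < p.choose a * b :=
      mul_lt_mul_of_pos_left (by omega) hCpos
    have h3 : b * p.choose a < b * p.choose a :=
      lt_of_le_of_lt (le_trans hnat hle) (by rw [mul_comm b (p.choose a)]; exact h2)
    exact lt_irrefl _ h3
  obtain ⟨S, hS, hbS⟩ := hex
  rw [Finset.mem_powersetCard] at hS
  obtain ⟨B', hB'W, hB'card, hadj⟩ := cCard_extract G S W hbS
  exact ⟨S, B', hS.1, hB'W, hS.2, hB'card, hadj⟩
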